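/- Let n ≥ 2 and define e(v, u) := (n/2) λ_max(v ⊗ v − u) for v ∈ ℝⁿ, u ∈ Mₙ⁰. Then for all (v, u) ∈ ℝⁿ × Mₙ⁰ the operator norm of u satisfies ‖u‖_op ≤ (2(n−1)/n) e(v, u). -/

import Mathlib

open scoped BigOperators

noncomputable section

/-- The Euclidean norm of a vector in `ℝ^m`. -/
def eNorm {m : ℕ} (v : Fin m → ℝ) : ℝ := Real.sqrt (∑ i, v i ^ 2)

/-- `Mₙ⁰`: the submodule of symmetric trace-free `n × n` real matrices. -/
def M0 (n : ℕ) : Submodule ℝ (Matrix (Fin n) (Fin n) ℝ) where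
  carrier := {A | A.IsSymm ∧ A.trace = 0}
  add_mem' := fun ha hb => ⟨ha.1.add hb.1, by rw [Matrix.trace_add, ha.2, hb.2, add_zero]⟩
  zero_mem' := ⟨Matrix.isSymm_zero, Matrix.trace_zero ..⟩
  smul_mem' := fun c _ hA => ⟨hA.1.smul c, by rw [Matrix.trace_smul, hA.2, smul_zero]⟩

/-- For `v ∈ ℝⁿ` and `u ∈ Mₙ⁰`, the matrix `v ⊗ v − u` is symmetric (hence Hermitian). -/
lemma herm_aux {n : ℕ} (v : Fin n → ℝ) (u : M0 n) :
    (Matrix.vecMulVec v v - (u : Matrix (Fin n) (Fin n) ℝ)).IsHermitian := by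
  rw [Matrix.IsHermitian, Matrix.conjTranspose_eq_transpose_of_trivial]
  have h1 : (Matrix.vecMulVec v v).IsSymm := by
    apply Matrix.IsSymm.ext
    intro i j
    simp [Matrix.vecMulVec_apply, mul_comm]
  exact h1.sub u.2.1

/-- `e(v, u) = (n/2) λ_max(v ⊗ v − u)`, where `λ_max` is the largest eigenvalue
of the symmetric matrix `v ⊗ v − u`. -/
def efun (n : ℕ) : (Fin n → ℝ) × M0 n → ℝ :=
  fun p => ((n : ℝ) / 2) * ⨆ i, (herm_aux p.1 p.2).eigenvalues i

/-- The operator norm of an `n × n` real matrix acting on Euclidean `ℝⁿ`. -/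
def opNormMat {n : ℕ} (A : Matrix (Fin n) (Fin n) ℝ) : ℝ :=
  ‖LinearMap.toContinuousLinearMap (Matrix.toEuclideanLin A)‖

namespace MyAux

open Matrix
variable {n : ℕ}

lemma dot_orth (U : Matrix (Fin n) (Fin n) ℝ) (hU : Uᵀ * U = 1) (a : Fin n → ℝ) :
    (U *ᵥ a) ⬝ᵥ (U *ᵥ a) = a ⬝ᵥ a := by
  have h : U *ᵥ a = a ᵥ* Uᵀ := by rw [← mulVec_transpose, transpose_transpose]
  rw [dotProduct_mulVec, h, vecMul_vecMul, hU, vecMul_one]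

lemma spectral (A : Matrix (Fin n) (Fin n) ℝ) (hA : A.IsHermitian) :
    ∃ U : Matrix (Fin n) (Fin n) ℝ, Uᵀ * U = 1 ∧ U * Uᵀ = 1 ∧
      A = U * Matrix.diagonal hA.eigenvalues * Uᵀ := by
  refine ⟨hA.eigenvectorUnitary, ?_, ?_, ?_⟩
  · have := (hA.eigenvectorUnitary).2
    rw [Unitary.mem_iff] at this
    simpa [Matrix.star_eq_conjTranspose, Matrix.conjTranspose_eq_transpose_of_trivial] using this.1
  · have := (hA.eigenvectorUnitary).2
    rw [Unitary.mem_iff] at this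
    simpa [Matrix.star_eq_conjTranspose, Matrix.conjTranspose_eq_transpose_of_trivial] using this.2
  · have := hA.spectral_theorem
    simpa [Matrix.star_eq_conjTranspose, Matrix.conjTranspose_eq_transpose_of_trivial] using this

lemma dot_sq (a : Fin n → ℝ) : a ⬝ᵥ a = ∑ i, a i ^ 2 := by
  simp only [dotProduct]; exact Finset.sum_congr rfl fun i _ => by ring

lemma quad_le_of (A : Matrix (Fin n) (Fin n) ℝ) (hA : A.IsHermitian) (c : ℝ)
    (h : ∀ i, hA.eigenvalues i ≤ c) (x : Fin n → ℝ) :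
    x ⬝ᵥ (A *ᵥ x) ≤ c * (x ⬝ᵥ x) := by
  obtain ⟨U, hU1, hU2, hAe⟩ := spectral A hA
  have hxx : x ⬝ᵥ x = (Uᵀ *ᵥ x) ⬝ᵥ (Uᵀ *ᵥ x) :=
    (dot_orth Uᵀ (by rw [transpose_transpose]; exact hU2) x).symm
  have hAx : A *ᵥ x = U *ᵥ (Matrix.diagonal hA.eigenvalues *ᵥ (Uᵀ *ᵥ x)) := by
    conv_lhs => rw [hAe]
    simp [Matrix.mul_assoc]
  have hq : x ⬝ᵥ (A *ᵥ x) = (Uᵀ *ᵥ x) ⬝ᵥ (Matrix.diagonal hA.eigenvalues *ᵥ (Uᵀ *ᵥ x)) := by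
    rw [hAx, dotProduct_mulVec]
    congr 1
    rw [mulVec_transpose]
  have hdq : (Uᵀ *ᵥ x) ⬝ᵥ (Matrix.diagonal hA.eigenvalues *ᵥ (Uᵀ *ᵥ x))
      = ∑ i, hA.eigenvalues i * (Uᵀ *ᵥ x) i ^ 2 := by
    simp only [dotProduct, mulVec_diagonal]
    exact Finset.sum_congr rfl fun i _ => by ring
  rw [hq, hdq, hxx, dot_sq, Finset.mul_sum]
  exact Finset.sum_le_sum fun i _ => mul_le_mul_of_nonneg_right (h i) (sq_nonneg _)

lemma opNorm_le_of (A : Matrix (Fin n) (Fin n) ℝ) (hA : A.IsHermitian) (C : ℝ) (hC : 0 ≤ C)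
    (h : ∀ i, |hA.eigenvalues i| ≤ C) :
    ‖LinearMap.toContinuousLinearMap (Matrix.toEuclideanLin A)‖ ≤ C := by
  obtain ⟨U, hU1, hU2, hAe⟩ := spectral A hA
  apply ContinuousLinearMap.opNorm_le_bound _ hC
  intro x
  have hTx : ‖LinearMap.toContinuousLinearMap (Matrix.toEuclideanLin A) x‖
      = Real.sqrt ((A *ᵥ ⇑x) ⬝ᵥ (A *ᵥ ⇑x)) := by
    rw [LinearMap.coe_toContinuousLinearMap', EuclideanSpace.norm_eq]
    congr 1
    rw [Matrix.toEuclideanLin_apply, dot_sq]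
    exact Finset.sum_congr rfl fun i _ => by simp [Real.norm_eq_abs, sq_abs]
  have hnx : ‖x‖ = Real.sqrt ((⇑x) ⬝ᵥ (⇑x)) := by
    rw [EuclideanSpace.norm_eq, dot_sq]
    congr 1
    exact Finset.sum_congr rfl fun i _ => by simp [Real.norm_eq_abs, sq_abs]
  rw [hTx, hnx]
  have hAx : A *ᵥ ⇑x = U *ᵥ (Matrix.diagonal hA.eigenvalues *ᵥ (Uᵀ *ᵥ ⇑x)) := by
    conv_lhs => rw [hAe]
    simp [Matrix.mul_assoc]
  have hxx : (⇑x) ⬝ᵥ (⇑x) = (Uᵀ *ᵥ ⇑x) ⬝ᵥ (Uᵀ *ᵥ ⇑x) :=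
    (dot_orth Uᵀ (by rw [transpose_transpose]; exact hU2) ⇑x).symm
  have key : (A *ᵥ ⇑x) ⬝ᵥ (A *ᵥ ⇑x) ≤ C ^ 2 * ((⇑x) ⬝ᵥ (⇑x)) := by
    rw [hAx, dot_orth U hU1, hxx]
    have h1 : (Matrix.diagonal hA.eigenvalues *ᵥ (Uᵀ *ᵥ ⇑x)) ⬝ᵥ
        (Matrix.diagonal hA.eigenvalues *ᵥ (Uᵀ *ᵥ ⇑x))
        = ∑ i, (hA.eigenvalues i) ^ 2 * (Uᵀ *ᵥ ⇑x) i ^ 2 := by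
      simp only [dotProduct, mulVec_diagonal]
      exact Finset.sum_congr rfl fun i _ => by ring
    rw [h1, dot_sq, Finset.mul_sum]
    refine Finset.sum_le_sum fun i _ => mul_le_mul_of_nonneg_right ?_ (sq_nonneg _)
    calc (hA.eigenvalues i) ^ 2 = |hA.eigenvalues i| ^ 2 := (sq_abs _).symm
      _ ≤ C ^ 2 := by apply pow_le_pow_left₀ (abs_nonneg _) (h i)
  calc Real.sqrt ((A *ᵥ ⇑x) ⬝ᵥ (A *ᵥ ⇑x)) ≤ Real.sqrt (C ^ 2 * ((⇑x) ⬝ᵥ (⇑x))) :=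
        Real.sqrt_le_sqrt key
    _ = C * Real.sqrt ((⇑x) ⬝ᵥ (⇑x)) := by
        rw [Real.sqrt_mul (sq_nonneg _), Real.sqrt_sq hC]

lemma sum_eigenvalues (A : Matrix (Fin n) (Fin n) ℝ) (hA : A.IsHermitian) :
    ∑ i, hA.eigenvalues i = A.trace := by
  conv_rhs => rw [hA.spectral_theorem]
  rw [Unitary.conjStarAlgAut_apply, Matrix.trace_mul_cycle]
  have h1 : star (hA.eigenvectorUnitary : Matrix (Fin n) (Fin n) ℝ) *
      (hA.eigenvectorUnitary : Matrix (Fin n) (Fin n) ℝ) = 1 :=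
    ((Unitary.mem_iff).1 (hA.eigenvectorUnitary).2).1
  rw [h1, Matrix.one_mul]
  simp [Matrix.trace_diagonal]

lemma eigenvalue_eq_quad (A : Matrix (Fin n) (Fin n) ℝ) (hA : A.IsHermitian) (i : Fin n) :
    hA.eigenvalues i = (⇑(hA.eigenvectorBasis i)) ⬝ᵥ (A *ᵥ ⇑(hA.eigenvectorBasis i)) := by
  have := hA.eigenvalues_eq i
  simpa using this

lemma eigenvector_dot_self (A : Matrix (Fin n) (Fin n) ℝ) (hA : A.IsHermitian) (i : Fin n) :
    (⇑(hA.eigenvectorBasis i)) ⬝ᵥ (⇑(hA.eigenvectorBasis i)) = 1 := by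
  have h1 : ‖hA.eigenvectorBasis i‖ = 1 := hA.eigenvectorBasis.orthonormal.1 i
  have h2 : ‖hA.eigenvectorBasis i‖ ^ 2
      = (⇑(hA.eigenvectorBasis i)) ⬝ᵥ (⇑(hA.eigenvectorBasis i)) := by
    rw [EuclideanSpace.norm_eq, Real.sq_sqrt (Finset.sum_nonneg fun _ _ => sq_nonneg _), dot_sq]
    exact Finset.sum_congr rfl fun j _ => by simp [Real.norm_eq_abs, sq_abs]
  rw [← h2, h1, one_pow]

lemma dot_vecMulVec (v w : Fin n → ℝ) :
    w ⬝ᵥ (Matrix.vecMulVec v v *ᵥ w) = (v ⬝ᵥ w) ^ 2 := by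
  have h0 : Matrix.vecMulVec v v *ᵥ w = fun i => v i * (v ⬝ᵥ w) := by
    funext i
    simp [Matrix.mulVec, Matrix.vecMulVec_apply, dotProduct, Finset.mul_sum, mul_assoc]
  rw [h0]
  show ∑ i, w i * (v i * (v ⬝ᵥ w)) = (v ⬝ᵥ w) ^ 2
  rw [sq]
  have h1 : ∑ i, w i * (v i * (v ⬝ᵥ w)) = (∑ i, v i * w i) * (v ⬝ᵥ w) := by
    rw [Finset.sum_mul]
    exact Finset.sum_congr rfl fun i _ => by ring
  rw [h1]
  rfl

end MyAux

open Matrix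

/-- `‖u‖_op ≤ (2(n−1)/n) e(v,u)` for all `(v,u) ∈ ℝⁿ × Mₙ⁰`. -/
theorem opNorm_le_efun (n : ℕ) (hn : 2 ≤ n) (v : Fin n → ℝ) (u : M0 n) :
    opNormMat (u : Matrix (Fin n) (Fin n) ℝ) ≤ (2 * ((n : ℝ) - 1) / n) * efun n (v, u) := by
  have hn1 : 1 ≤ n := le_trans (by norm_num) hn
  have hne : Nonempty (Fin n) := ⟨⟨0, by omega⟩⟩
  have hn2R : (2 : ℝ) ≤ (n : ℝ) := by exact_mod_cast hn
  set A : Matrix (Fin n) (Fin n) ℝ := (u : Matrix (Fin n) (Fin n) ℝ) with hAdef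
  have hu : A.IsHermitian := by
    rw [Matrix.IsHermitian, Matrix.conjTranspose_eq_transpose_of_trivial]
    exact u.2.1
  have hM : (Matrix.vecMulVec v v - A).IsHermitian := herm_aux v u
  set lam : ℝ := ⨆ i, hM.eigenvalues i with hlam
  have hbdd : BddAbove (Set.range hM.eigenvalues) := Set.Finite.bddAbove (Set.finite_range _)
  have hle : ∀ i, hM.eigenvalues i ≤ lam := fun i => le_ciSup hbdd i
  have hsumM : ∑ i, hM.eigenvalues i = ∑ i, v i * v i := by
    rw [MyAux.sum_eigenvalues _ hM, Matrix.trace_sub, u.2.2, sub_zero]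
    simp [Matrix.trace, Matrix.diag, Matrix.vecMulVec_apply]
  have hlam0 : 0 ≤ lam := by
    by_contra hcon
    push_neg at hcon
    have hlt : ∑ i, hM.eigenvalues i < 0 := by
      calc ∑ i, hM.eigenvalues i < ∑ _i : Fin n, (0 : ℝ) :=
            Finset.sum_lt_sum_of_nonempty Finset.univ_nonempty
              (fun i _ => lt_of_le_of_lt (hle i) hcon)
        _ = 0 := by simp
    rw [hsumM] at hlt
    exact absurd hlt (not_lt.2 (Finset.sum_nonneg fun i _ => mul_self_nonneg _))
  -- each eigenvalue of u is at least -lam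
  have hlow : ∀ i, -lam ≤ hu.eigenvalues i := by
    intro i
    obtain ⟨w, hwq, hws⟩ : ∃ w : Fin n → ℝ,
        hu.eigenvalues i = w ⬝ᵥ (A *ᵥ w) ∧ w ⬝ᵥ w = 1 :=
      ⟨_, MyAux.eigenvalue_eq_quad A hu i, MyAux.eigenvector_dot_self A hu i⟩
    have hA' : A = Matrix.vecMulVec v v - (Matrix.vecMulVec v v - A) :=
      (sub_sub_cancel _ _).symm
    have heq : w ⬝ᵥ (A *ᵥ w)
        = (v ⬝ᵥ w) ^ 2 - w ⬝ᵥ ((Matrix.vecMulVec v v - A) *ᵥ w) := by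
      conv_lhs => rw [hA']
      rw [Matrix.sub_mulVec, dotProduct_sub, MyAux.dot_vecMulVec]
    have hMq : w ⬝ᵥ ((Matrix.vecMulVec v v - A) *ᵥ w) ≤ lam := by
      have := MyAux.quad_le_of _ hM lam hle w
      rwa [hws, mul_one] at this
    rw [hwq, heq]
    nlinarith [sq_nonneg (v ⬝ᵥ w)]
  have hsumu : ∑ i, hu.eigenvalues i = 0 := by
    rw [MyAux.sum_eigenvalues A hu]
    exact u.2.2
  -- each eigenvalue of u is at most (n-1) * lam
  have hup : ∀ j, hu.eigenvalues j ≤ ((n : ℝ) - 1) * lam := by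
    intro j
    have hadd := Finset.add_sum_erase Finset.univ hu.eigenvalues (Finset.mem_univ j)
    have hcard : ((Finset.univ.erase j).card : ℝ) = (n : ℝ) - 1 := by
      rw [Finset.card_erase_of_mem (Finset.mem_univ j)]
      simp [Nat.cast_sub hn1]
    have hbound : ∑ i ∈ Finset.univ.erase j, (-lam) ≤ ∑ i ∈ Finset.univ.erase j,
        hu.eigenvalues i :=
      Finset.sum_le_sum fun i _ => hlow i
    have hconst : ∑ _i ∈ Finset.univ.erase j, (-lam) = ((n : ℝ) - 1) * (-lam) := by
      rw [Finset.sum_const, nsmul_eq_mul, hcard]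
    rw [hsumu] at hadd
    rw [hconst] at hbound
    nlinarith
  have hnonneg : 0 ≤ ((n : ℝ) - 1) * lam := mul_nonneg (by linarith) hlam0
  have habs : ∀ j, |hu.eigenvalues j| ≤ ((n : ℝ) - 1) * lam := by
    intro j
    rw [abs_le]
    constructor
    · have h1 : lam ≤ ((n : ℝ) - 1) * lam := by nlinarith
      have := hlow j
      linarith
    · exact hup j
  have hmain : opNormMat A ≤ ((n : ℝ) - 1) * lam :=
    MyAux.opNorm_le_of A hu _ hnonneg habs
  have hefun : efun n (v, u) = ((n : ℝ) / 2) * lam := rfl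
  rw [hefun]
  have harith : 2 * ((n : ℝ) - 1) / n * ((n : ℝ) / 2 * lam) = ((n : ℝ) - 1) * lam := by
    have hn0 : (n : ℝ) ≠ 0 := by linarith
    field_simp
  rw [harith]
  exact hmain

end
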